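/- Let f : ℝ → ℝ be the sinc function, f(t) = sin(πt)/(πt) for t ≠ 0 and f(0) = 1, and for n ∈ ℤ^d let φ̂_n(x) = ∏_{j=1}^d f(n_j + x_j). Then for every constant ρ > d and every multiindex α ∈ ℕ^d, the weighted sum ∑_{n ∈ ℤ^d} ∫_{ℝ^d} (1 + |x|²)^{-ρ} |∂^α φ̂_n(x)|² dx is finite. -/

import Mathlib

open scoped BigOperators

/-- The sinc function: `f(t) = sin(πt)/(πt)` for `t ≠ 0` and `f(0) = 1`. -/
noncomputable def sinc (t : ℝ) : ℝ :=
  if t = 0 then 1 else Real.sin (Real.pi * t) / (Real.pi * t)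

/-- `φ̂_n(x) = ∏_{j=1}^d f(n_j + x_j)` where `f` is the sinc function. -/
noncomputable def phihat {d : ℕ} (n : Fin d → ℤ) (x : Fin d → ℝ) : ℝ :=
  ∏ j, sinc ((n j : ℝ) + x j)

/-- Partial derivative in the `j`-th coordinate direction. -/
noncomputable def coordDeriv {d : ℕ} {E : Type*} [NormedAddCommGroup E] [NormedSpace ℝ E]
    (j : Fin d) (g : (Fin d → ℝ) → E) : (Fin d → ℝ) → E :=
  fun x => fderiv ℝ g x (Pi.single j 1)

/-- The multiindex partial derivative `∂^α = ∂^{α_1}_{x_1} ⋯ ∂^{α_d}_{x_d}`. -/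
noncomputable def multiDeriv {d : ℕ} {E : Type*} [NormedAddCommGroup E] [NormedSpace ℝ E]
    (α : Fin d → ℕ) (g : (Fin d → ℝ) → E) : (Fin d → ℝ) → E :=
  (List.finRange d).foldr (fun j h => (coordDeriv j)^[α j] h) g

open MeasureTheory

open Real intervalIntegral Set
open scoped ENNReal NNReal

noncomputable def sincDer (k : ℕ) (t : ℝ) : ℝ :=
  ∫ s in (0:ℝ)..1, (π * s) ^ k * Real.cos (π * t * s + k * (π / 2))

lemma sincDer_cont (k : ℕ) (t : ℝ) :
    Continuous fun s : ℝ => (π * s) ^ k * Real.cos (π * t * s + k * (π / 2)) := by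
  fun_prop

lemma sincDer_hasDerivAt (k : ℕ) (t : ℝ) : HasDerivAt (sincDer k) (sincDer (k + 1) t) t := by
  have key := intervalIntegral.hasDerivAt_integral_of_dominated_loc_of_deriv_le
    (F := fun (x : ℝ) (s : ℝ) => (π * s) ^ k * Real.cos (π * x * s + k * (π / 2)))
    (F' := fun (x : ℝ) (s : ℝ) => (π * s) ^ (k + 1) * Real.cos (π * x * s + (k + 1 : ℕ) * (π / 2)))
    (x₀ := t) (s := Metric.ball t 1) (a := (0:ℝ)) (b := (1:ℝ)) (μ := volume)
    (bound := fun _ => π ^ (k + 1)) (Metric.ball_mem_nhds t one_pos)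
    (Filter.Eventually.of_forall fun x => (sincDer_cont k x).aestronglyMeasurable)
    ((sincDer_cont k t).intervalIntegrable 0 1)
    ((by fun_prop : Continuous fun s : ℝ =>
        (π * s) ^ (k + 1) * Real.cos (π * t * s + (k + 1 : ℕ) * (π / 2))).aestronglyMeasurable)
    ?_ intervalIntegrable_const ?_
  · exact key.2
  · refine ae_of_all _ fun s hs x _ => ?_
    rw [Set.uIoc_of_le (zero_le_one : (0:ℝ) ≤ 1)] at hs
    have h0 : 0 ≤ π * s := mul_nonneg pi_pos.le hs.1.le
    have h1 : π * s ≤ π := mul_le_of_le_one_right pi_pos.le hs.2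
    show ‖(π * s) ^ (k + 1) * Real.cos (π * x * s + (k + 1 : ℕ) * (π / 2))‖ ≤ π ^ (k + 1)
    rw [Real.norm_eq_abs, abs_mul, abs_pow, abs_of_nonneg h0]
    calc (π * s) ^ (k + 1) * |Real.cos (π * x * s + (k + 1 : ℕ) * (π / 2))|
          ≤ π ^ (k + 1) * 1 := by
            exact mul_le_mul (pow_le_pow_left₀ h0 h1 _) (Real.abs_cos_le_one _)
              (abs_nonneg _) (by positivity)
        _ = π ^ (k + 1) := mul_one _
  · refine ae_of_all _ fun s _ x _ => ?_
    have hlin : HasDerivAt (fun x : ℝ => π * x * s + (k : ℝ) * (π / 2)) (π * s) x := by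
      simpa [mul_assoc] using ((hasDerivAt_mul_const s).const_mul π).add_const ((k : ℝ) * (π / 2))
    have h3 := (hlin.cos).const_mul ((π * s) ^ k)
    have e : (π * s) ^ (k + 1) * Real.cos (π * x * s + ((k + 1 : ℕ) : ℝ) * (π / 2))
        = (π * s) ^ k * (-Real.sin (π * x * s + (k : ℝ) * (π / 2)) * (π * s)) := by
      rw [show (π * x * s + ((k + 1 : ℕ) : ℝ) * (π / 2))
            = (π * x * s + (k : ℝ) * (π / 2)) + π / 2 by push_cast; ring,
        Real.cos_add_pi_div_two]
      ring
    show HasDerivAt (fun x : ℝ => (π * s) ^ k * Real.cos (π * x * s + k * (π / 2)))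
      ((π * s) ^ (k + 1) * Real.cos (π * x * s + ((k + 1 : ℕ) : ℝ) * (π / 2))) x
    rw [e]
    exact h3

lemma sincDer_zero : sincDer 0 = _root_.sinc := by
  funext t
  rw [sincDer, _root_.sinc]
  simp only [pow_zero, one_mul, Nat.cast_zero, zero_mul, add_zero]
  by_cases ht : t = 0
  · simp [ht]
  · rw [if_neg ht]
    have hπt : π * t ≠ 0 := mul_ne_zero Real.pi_ne_zero ht
    have : ∀ s : ℝ, π * t * s = (π * t) * s := fun s => rfl
    rw [intervalIntegral.integral_comp_mul_left (fun u => Real.cos u) hπt]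
    simp [integral_cos, div_eq_inv_mul]

lemma abs_sincDer_le (k : ℕ) (t : ℝ) : |sincDer k t| ≤ π ^ k := by
  have h := intervalIntegral.norm_integral_le_of_norm_le_const (C := π ^ k) (a := (0:ℝ)) (b := 1)
    (f := fun s : ℝ => (π * s) ^ k * Real.cos (π * t * s + k * (π / 2))) ?_
  · simpa [sincDer] using h
  · intro s hs
    rw [Set.uIoc_of_le (zero_le_one : (0:ℝ) ≤ 1)] at hs
    have h0 : 0 ≤ π * s := mul_nonneg pi_pos.le hs.1.le
    have h1 : π * s ≤ π := mul_le_of_le_one_right pi_pos.le hs.2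
    rw [Real.norm_eq_abs, abs_mul, abs_pow, abs_of_nonneg h0]
    calc (π * s) ^ k * |Real.cos (π * t * s + k * (π / 2))|
        ≤ π ^ k * 1 := mul_le_mul (pow_le_pow_left₀ h0 h1 _) (Real.abs_cos_le_one _)
          (abs_nonneg _) (by positivity)
      _ = π ^ k := mul_one _

lemma abs_sincDer_le_div (k : ℕ) {t : ℝ} (ht : t ≠ 0) :
    |sincDer k t| ≤ (k + 1) * π ^ k / |t| := by
  have hπt : π * t ≠ 0 := mul_ne_zero Real.pi_ne_zero ht
  set u : ℝ → ℝ := fun s => (π * s) ^ k with hu_def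
  set u' : ℝ → ℝ := fun s => (k : ℝ) * (π * s) ^ (k - 1) * π with hu'_def
  set v : ℝ → ℝ := fun s => Real.sin (π * t * s + k * (π / 2)) / (π * t) with hv_def
  set v' : ℝ → ℝ := fun s => Real.cos (π * t * s + k * (π / 2)) with hv'_def
  have hu : ∀ s : ℝ, HasDerivAt u (u' s) s := by
    intro s
    have hπs : HasDerivAt (fun s : ℝ => π * s) π s := by
      simpa using (hasDerivAt_id s).const_mul π
    exact (hasDerivAt_pow k (π * s)).comp s hπs
  have hv : ∀ s : ℝ, HasDerivAt v (v' s) s := by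
    intro s
    have hlin : HasDerivAt (fun s : ℝ => π * t * s + (k : ℝ) * (π / 2)) (π * t) s := by
      simpa using ((hasDerivAt_id s).const_mul (π * t)).add_const ((k : ℝ) * (π / 2))
    have := (hlin.sin).div_const (π * t)
    rwa [mul_div_assoc, div_self hπt, mul_one] at this
  have hu'cont : Continuous u' := by fun_prop
  have hvcont : Continuous v := by fun_prop
  have hibp := intervalIntegral.integral_mul_deriv_eq_deriv_mul (a := (0:ℝ)) (b := 1)
    (fun s _ => hu s) (fun s _ => hv s)
    (hu'cont.intervalIntegrable 0 1)
    ((by fun_prop : Continuous v').intervalIntegrable 0 1)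
  have hsinc : sincDer k t = u 1 * v 1 - u 0 * v 0 - ∫ s in (0:ℝ)..1, u' s * v s := by
    rw [sincDer, ← hibp]
  have h00 : u 0 * v 0 = 0 := by
    rcases k with _ | k
    · simp [hu_def, hv_def]
    · simp [hu_def]
  have hT : 0 < |t| := abs_pos.mpr ht
  have hπT : 0 < π * |t| := mul_pos pi_pos hT
  have hone_le_pi : (1:ℝ) ≤ π := by linarith [Real.pi_gt_three]
  have hvb : ∀ s : ℝ, |v s| ≤ 1 / (π * |t|) := by
    intro s
    rw [hv_def]
    simp only
    rw [abs_div, abs_mul, abs_of_nonneg pi_pos.le]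
    gcongr
    exact Real.abs_sin_le_one _
  have h1 : |u 1 * v 1| ≤ π ^ k * (1 / (π * |t|)) := by
    rw [abs_mul]
    refine mul_le_mul ?_ (hvb 1) (abs_nonneg _) (by positivity)
    rw [hu_def]
    simp only [mul_one]
    rw [abs_pow, abs_of_nonneg pi_pos.le]
  have haux : ∀ s : ℝ, s ∈ Set.Ioc (0:ℝ) 1 → |u' s| ≤ (k : ℝ) * π ^ k := by
    intro s hs
    have h0 : 0 ≤ π * s := mul_nonneg pi_pos.le hs.1.le
    have hnn : 0 ≤ u' s :=
      mul_nonneg (mul_nonneg (Nat.cast_nonneg k) (pow_nonneg h0 _)) pi_pos.le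
    rw [abs_of_nonneg hnn, hu'_def]
    simp only
    have hps : (π * s) ^ (k - 1) ≤ π ^ (k - 1) :=
      pow_le_pow_left₀ h0 (mul_le_of_le_one_right pi_pos.le hs.2) _
    rcases k with _ | m
    · simp
    · have hm : (m + 1 : ℕ) - 1 = m := rfl
      rw [hm] at hps ⊢
      calc ((m + 1 : ℕ) : ℝ) * (π * s) ^ m * π ≤ ((m + 1 : ℕ) : ℝ) * π ^ m * π := by
            have hc : (0:ℝ) ≤ ((m + 1 : ℕ) : ℝ) := by positivity
            have hpp : (0:ℝ) ≤ (π*s) ^ m := pow_nonneg h0 _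
            exact mul_le_mul_of_nonneg_right (mul_le_mul_of_nonneg_left hps hc) pi_pos.le
        _ = ((m + 1 : ℕ) : ℝ) * π ^ (m + 1) := by ring
  have h2 : |∫ s in (0:ℝ)..1, u' s * v s| ≤ (k : ℝ) * π ^ k * (1 / (π * |t|)) := by
    have hb := intervalIntegral.norm_integral_le_of_norm_le_const
      (C := (k : ℝ) * π ^ k * (1 / (π * |t|))) (a := (0:ℝ)) (b := 1)
      (f := fun s => u' s * v s) ?_
    · simpa using hb
    · intro s hs
      rw [Set.uIoc_of_le (zero_le_one : (0:ℝ) ≤ 1)] at hs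
      rw [Real.norm_eq_abs, abs_mul]
      exact mul_le_mul (haux s hs) (hvb s) (abs_nonneg _) (by positivity)
  have habs : |sincDer k t| ≤ |u 1 * v 1| + |∫ s in (0:ℝ)..1, u' s * v s| := by
    rw [hsinc, h00, sub_zero, sub_eq_add_neg]
    exact (abs_add_le _ _).trans (by rw [abs_neg])
  calc |sincDer k t| ≤ π ^ k * (1 / (π * |t|)) + (k : ℝ) * π ^ k * (1 / (π * |t|)) :=
        habs.trans (add_le_add h1 h2)
    _ = ((k : ℝ) + 1) * π ^ k / (π * |t|) := by ring
    _ ≤ ((k : ℝ) + 1) * π ^ k / |t| := by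
        apply div_le_div_of_nonneg_left (by positivity) hT
        exact le_mul_of_one_le_left hT.le hone_le_pi

lemma sq_sincDer_le (k : ℕ) (t : ℝ) :
    (sincDer k t) ^ 2 ≤ 2 * (((k : ℝ) + 1) * π ^ k) ^ 2 / (1 + t ^ 2) := by
  have hC : (0:ℝ) < ((k : ℝ) + 1) * π ^ k := by positivity
  have hden : (0:ℝ) < 1 + t ^ 2 := by positivity
  have hpk : |sincDer k t| ≤ ((k : ℝ) + 1) * π ^ k := by
    refine (abs_sincDer_le k t).trans ?_
    nlinarith [pow_pos pi_pos k]
  rcases le_or_gt (|t|) 1 with h | h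
  · have h1 : (sincDer k t) ^ 2 ≤ (((k : ℝ) + 1) * π ^ k) ^ 2 := by
      have := abs_nonneg (sincDer k t)
      nlinarith [sq_abs (sincDer k t)]
    have h2 : t ^ 2 ≤ 1 := by nlinarith [sq_abs t, abs_nonneg t]
    rw [le_div_iff₀ hden]
    nlinarith
  · have ht : t ≠ 0 := by
      intro h0; rw [h0] at h; simp at h; linarith
    have hd := abs_sincDer_le_div k ht
    have ht2 : 1 ≤ t ^ 2 := by nlinarith [sq_abs t]
    have hT : 0 < |t| := abs_pos.mpr ht
    have h1 : (sincDer k t) ^ 2 ≤ (((k : ℝ) + 1) * π ^ k) ^ 2 / t ^ 2 := by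
      have := abs_nonneg (sincDer k t)
      rw [le_div_iff₀ (by nlinarith)]
      have h3 : |sincDer k t| * |t| ≤ ((k : ℝ) + 1) * π ^ k := by
        have := mul_le_mul_of_nonneg_right hd hT.le
        rwa [div_mul_cancel₀ _ (ne_of_gt hT)] at this
      calc (sincDer k t) ^ 2 * t ^ 2 = (|sincDer k t| * |t|) ^ 2 := by
            rw [mul_pow, sq_abs, sq_abs]
        _ ≤ (((k : ℝ) + 1) * π ^ k) ^ 2 := by nlinarith [mul_nonneg this hT.le]
    refine h1.trans ?_
    rw [div_le_div_iff₀ (by nlinarith) hden]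
    nlinarith [sq_nonneg (((k : ℝ) + 1) * π ^ k)]

/-- `coordDeriv` of a separable product of shifted `sincDer`s. -/
lemma coordDeriv_sepProd {d : ℕ} (c : Fin d → ℝ) (m : Fin d → ℕ) (j : Fin d) :
    coordDeriv j (fun x : Fin d → ℝ => ∏ i, sincDer (m i) (c i + x i)) =
      fun x => ∏ i, sincDer (m i + if i = j then 1 else 0) (c i + x i) := by
  funext x
  have hgi : ∀ i : Fin d, HasFDerivAt (fun y : Fin d → ℝ => sincDer (m i) (c i + y i))
      ((sincDer (m i + 1) (c i + x i)) • (ContinuousLinearMap.proj i :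
        (Fin d → ℝ) →L[ℝ] ℝ)) x := by
    intro i
    have h1 : HasDerivAt (fun t : ℝ => sincDer (m i) (c i + t))
        (sincDer (m i + 1) (c i + x i)) (x i) := by
      have := (sincDer_hasDerivAt (m i) (c i + x i)).comp (x i)
        (((hasDerivAt_id (x i)).const_add (c i)))
      rw [mul_one] at this
      exact this
    have h2 := h1.hasFDerivAt
    have h3 : HasFDerivAt (fun y : Fin d → ℝ => y i)
        (ContinuousLinearMap.proj i : (Fin d → ℝ) →L[ℝ] ℝ) x :=
      (ContinuousLinearMap.proj i : (Fin d → ℝ) →L[ℝ] ℝ).hasFDerivAt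
    have h4 := h2.comp x h3
    refine h4.congr_fderiv ?_
    ext y
    simp [ContinuousLinearMap.smulRight, mul_comm]
  have hprod := HasFDerivAt.finset_prod (u := Finset.univ)
    (g := fun i (y : Fin d → ℝ) => sincDer (m i) (c i + y i))
    (g' := fun i => (sincDer (m i + 1) (c i + x i)) • (ContinuousLinearMap.proj i :
      (Fin d → ℝ) →L[ℝ] ℝ)) (fun i _ => hgi i)
  have hfd : fderiv ℝ (fun y : Fin d → ℝ => ∏ i, sincDer (m i) (c i + y i)) x =
      ∑ i, (∏ l ∈ Finset.univ.erase i, sincDer (m l) (c l + x l)) •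
        ((sincDer (m i + 1) (c i + x i)) • (ContinuousLinearMap.proj i :
          (Fin d → ℝ) →L[ℝ] ℝ)) := hprod.fderiv
  rw [coordDeriv, hfd]
  simp only [ContinuousLinearMap.coe_sum', Finset.sum_apply, ContinuousLinearMap.coe_smul',
    Pi.smul_apply, ContinuousLinearMap.proj_apply, smul_eq_mul]
  rw [Finset.sum_eq_single j]
  · rw [Pi.single_eq_same]
    have : ∀ i : Fin d, sincDer (m i + if i = j then 1 else 0) (c i + x i) =
        Function.update (fun i : Fin d => sincDer (m i) (c i + x i)) j
          (sincDer (m j + 1) (c j + x j)) i := by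
      intro i
      rcases eq_or_ne i j with rfl | hij
      · simp
      · simp [Function.update_of_ne hij, hij]
    rw [Finset.prod_congr rfl fun i _ => this i,
      Finset.prod_update_of_mem (Finset.mem_univ j)]
    rw [Finset.erase_eq]
    ring
  · intro b _ hbj
    rw [Pi.single_eq_of_ne hbj]
    ring
  · intro h; exact absurd (Finset.mem_univ j) h

lemma iter_coordDeriv_sepProd {d : ℕ} (c : Fin d → ℝ) (j : Fin d) (k : ℕ) (m : Fin d → ℕ) :
    (coordDeriv j)^[k] (fun x : Fin d → ℝ => ∏ i, sincDer (m i) (c i + x i)) =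
      fun x => ∏ i, sincDer (m i + if i = j then k else 0) (c i + x i) := by
  induction k with
  | zero => simp
  | succ k ih =>
    rw [Function.iterate_succ_apply', ih, coordDeriv_sepProd]
    funext x
    refine Finset.prod_congr rfl fun i _ => ?_
    congr 1
    rcases eq_or_ne i j with rfl | hij
    · simp; omega
    · simp [hij]

lemma foldr_coordDeriv_sepProd {d : ℕ} (α : Fin d → ℕ) (c : Fin d → ℝ) (l : List (Fin d))
    (m : Fin d → ℕ) :
    l.foldr (fun j h => (coordDeriv j)^[α j] h)
        (fun x : Fin d → ℝ => ∏ i, sincDer (m i) (c i + x i)) =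
      fun x => ∏ i, sincDer (m i + α i * l.count i) (c i + x i) := by
  induction l generalizing m with
  | nil => simp
  | cons j l ih =>
    rw [List.foldr_cons, ih, iter_coordDeriv_sepProd]
    funext x
    refine Finset.prod_congr rfl fun i _ => ?_
    congr 1
    rcases eq_or_ne i j with rfl | hij
    · simp [List.count_cons]
      ring
    · simp [List.count_cons, hij, hij.symm]

lemma multiDeriv_phihat {d : ℕ} (α : Fin d → ℕ) (n : Fin d → ℤ) :
    multiDeriv α (phihat n) = fun x => ∏ i, sincDer (α i) ((n i : ℝ) + x i) := by
  have hphi : phihat n = fun x : Fin d → ℝ => ∏ i, sincDer 0 ((fun i => ((n i : ℝ))) i + x i) := by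
    funext x
    rw [phihat]
    exact Finset.prod_congr rfl fun i _ => by rw [sincDer_zero]
  rw [multiDeriv, hphi, foldr_coordDeriv_sepProd]
  funext x
  refine Finset.prod_congr rfl fun i _ => ?_
  congr 1
  have h1 : List.count i (List.finRange d) = 1 :=
    List.count_eq_one_of_mem (List.nodup_finRange d) (List.mem_finRange i)
  rw [h1]
  omega

lemma tsum_pi_prod {d : ℕ} (f : Fin d → ℤ → ENNReal) :
    ∑' n : Fin d → ℤ, ∏ i, f i (n i) = ∏ i, ∑' m : ℤ, f i m := by
  induction d with
  | zero =>
    rw [show (fun (n : Fin 0 → ℤ) => ∏ i, f i (n i)) = fun _ => 1 by funext; simp]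
    rw [tsum_eq_single (fun _ => 0) (fun b' hb => by
      exact absurd (funext fun i => i.elim0) hb)]
    simp
  | succ d ih =>
    rw [← Equiv.tsum_eq (Fin.consEquiv fun _ : Fin (d + 1) => ℤ) (fun n => ∏ i, f i (n i))]
    have hsplit : ∀ p : ℤ × (Fin d → ℤ),
        (∏ i, f i (((Fin.consEquiv fun _ : Fin (d + 1) => ℤ) p) i)) =
          f 0 p.1 * ∏ i : Fin d, f i.succ (p.2 i) := by
      intro p
      rw [Fin.prod_univ_succ]
      simp [Fin.consEquiv]
    calc ∑' p : ℤ × (Fin d → ℤ), ∏ i, f i (((Fin.consEquiv fun _ : Fin (d + 1) => ℤ) p) i)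
        = ∑' p : ℤ × (Fin d → ℤ), f 0 p.1 * ∏ i : Fin d, f i.succ (p.2 i) := by
          exact tsum_congr hsplit
      _ = ∑' (a : ℤ) (b : Fin d → ℤ), f 0 a * ∏ i : Fin d, f i.succ (b i) :=
          ENNReal.tsum_prod (f := fun (a : ℤ) (b : Fin d → ℤ) => f 0 a * ∏ i : Fin d, f i.succ (b i))
      _ = (∑' a : ℤ, f 0 a) * ∑' b : Fin d → ℤ, ∏ i : Fin d, f i.succ (b i) := by
          rw [← ENNReal.tsum_mul_right]
          exact tsum_congr fun a => ENNReal.tsum_mul_left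
      _ = (∑' a : ℤ, f 0 a) * ∏ i : Fin d, ∑' m : ℤ, f i.succ m := by
          rw [ih]
      _ = ∏ i, ∑' m : ℤ, f i m := by
          rw [Fin.prod_univ_succ]

lemma tsum_int_inv_one_add_sq_le (x : ℝ) :
    ∑' m : ℤ, ENNReal.ofReal (1 / (1 + ((m : ℝ) + x) ^ 2)) ≤ ENNReal.ofReal (2 * π) := by
  set a : ℝ := x - 1/2 with ha
  have hterm : ∀ m : ℤ, ENNReal.ofReal (1 / (1 + ((m : ℝ) + x) ^ 2))
      ≤ ∫⁻ s in Ioc (a + (m : ℝ)) (a + (m : ℝ) + 1), ENNReal.ofReal (2 / (1 + s ^ 2)) := by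
    intro m
    have hvol : volume (Ioc (a + (m : ℝ)) (a + (m : ℝ) + 1)) = 1 := by
      rw [Real.volume_Ioc]
      norm_num
    calc ENNReal.ofReal (1 / (1 + ((m : ℝ) + x) ^ 2))
        = ∫⁻ _ in Ioc (a + (m : ℝ)) (a + (m : ℝ) + 1),
            ENNReal.ofReal (1 / (1 + ((m : ℝ) + x) ^ 2)) := by
          rw [setLIntegral_const, hvol, mul_one]
      _ ≤ ∫⁻ s in Ioc (a + (m : ℝ)) (a + (m : ℝ) + 1), ENNReal.ofReal (2 / (1 + s ^ 2)) := by
          refine setLIntegral_mono (by fun_prop) fun s hs => ?_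
          apply ENNReal.ofReal_le_ofReal
          rw [div_le_div_iff₀ (by positivity) (by positivity)]
          have h1 : a + (m : ℝ) < s := hs.1
          have h2 : s ≤ a + (m : ℝ) + 1 := hs.2
          rw [ha] at h1 h2
          have habs : (s - ((m : ℝ) + x)) ^ 2 ≤ 1 / 4 := by nlinarith
          nlinarith [habs, sq_nonneg (2 * ((m : ℝ) + x) - s)]
  have hdisj : Pairwise (Function.onFun Disjoint
      (fun m : ℤ => Ioc (a + (m : ℝ)) (a + (m : ℝ) + 1))) := by
    intro m m' hne
    refine Set.Ioc_disjoint_Ioc.mpr ?_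
    rcases hne.lt_or_gt with h | h
    · have : (m : ℝ) + 1 ≤ m' := by exact_mod_cast Int.add_one_le_iff.mpr h
      calc min (a + (m:ℝ) + 1) (a + (m':ℝ) + 1) ≤ a + (m:ℝ) + 1 := min_le_left _ _
        _ ≤ a + (m':ℝ) := by linarith
        _ ≤ max (a + (m:ℝ)) (a + (m':ℝ)) := le_max_right _ _
    · have : (m' : ℝ) + 1 ≤ m := by exact_mod_cast Int.add_one_le_iff.mpr h
      calc min (a + (m:ℝ) + 1) (a + (m':ℝ) + 1) ≤ a + (m':ℝ) + 1 := min_le_right _ _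
        _ ≤ a + (m:ℝ) := by linarith
        _ ≤ max (a + (m:ℝ)) (a + (m':ℝ)) := le_max_left _ _
  have hint : Integrable (fun s : ℝ => 2 / (1 + s ^ 2)) := by
    simpa [div_eq_mul_inv] using integrable_inv_one_add_sq.const_mul 2
  calc ∑' m : ℤ, ENNReal.ofReal (1 / (1 + ((m : ℝ) + x) ^ 2))
      ≤ ∑' m : ℤ, ∫⁻ s in Ioc (a + (m : ℝ)) (a + (m : ℝ) + 1),
          ENNReal.ofReal (2 / (1 + s ^ 2)) := ENNReal.tsum_le_tsum hterm
    _ = ∫⁻ s in ⋃ m : ℤ, Ioc (a + (m : ℝ)) (a + (m : ℝ) + 1),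
          ENNReal.ofReal (2 / (1 + s ^ 2)) :=
        (lintegral_iUnion (fun _ => measurableSet_Ioc) hdisj _).symm
    _ = ∫⁻ s : ℝ, ENNReal.ofReal (2 / (1 + s ^ 2)) := by
        rw [iUnion_Ioc_add_intCast a, Measure.restrict_univ]
    _ = ENNReal.ofReal (2 * π) := by
        rw [← ofReal_integral_eq_lintegral_ofReal hint
          (Filter.Eventually.of_forall fun s => by positivity)]
        congr 1
        rw [show (fun s : ℝ => 2 / (1 + s ^ 2)) = fun s : ℝ => 2 * (1 + s ^ 2)⁻¹ by
          funext s; rw [div_eq_mul_inv]]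
        rw [MeasureTheory.integral_const_mul, integral_univ_inv_one_add_sq]

lemma weight_lintegral_lt_top {d : ℕ} {ρ : ℝ} (hρ : (d : ℝ) < ρ) :
    ∫⁻ x : Fin d → ℝ, ENNReal.ofReal ((1 + ∑ j, x j ^ 2) ^ (-ρ)) < ⊤ := by
  have hρ0 : 0 < ρ := lt_of_le_of_lt (Nat.cast_nonneg d) hρ
  have h2ρ : (Module.finrank ℝ (Fin d → ℝ) : ℝ) < 2 * ρ := by
    rw [Module.finrank_pi, Fintype.card_fin]
    linarith
  have hint := integrable_rpow_neg_one_add_norm_sq (E := Fin d → ℝ) (μ := volume) h2ρ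
  have hnormsq : ∀ x : Fin d → ℝ, ‖x‖ ^ 2 ≤ ∑ j, x j ^ 2 := by
    intro x
    have hs : (0:ℝ) ≤ ∑ j, x j ^ 2 := by positivity
    have hn : ‖x‖ ≤ Real.sqrt (∑ j, x j ^ 2) := by
      rw [pi_norm_le_iff_of_nonneg (Real.sqrt_nonneg _)]
      intro i
      rw [show ‖x i‖ = Real.sqrt ((x i) ^ 2) by rw [Real.sqrt_sq_eq_abs]; exact (Real.norm_eq_abs _)]
      exact Real.sqrt_le_sqrt (Finset.single_le_sum (fun j _ => sq_nonneg (x j))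
        (Finset.mem_univ i))
    calc ‖x‖ ^ 2 ≤ Real.sqrt (∑ j, x j ^ 2) ^ 2 :=
          pow_le_pow_left₀ (norm_nonneg x) hn 2
      _ = ∑ j, x j ^ 2 := Real.sq_sqrt hs
  have hptwise : ∀ x : Fin d → ℝ,
      ENNReal.ofReal ((1 + ∑ j, x j ^ 2) ^ (-ρ)) ≤
        ENNReal.ofReal ((1 + ‖x‖ ^ 2) ^ (-(2 * ρ) / 2)) := by
    intro x
    apply ENNReal.ofReal_le_ofReal
    rw [show -(2 * ρ) / 2 = -ρ by ring]
    exact Real.rpow_le_rpow_of_nonpos (by positivity) (by linarith [hnormsq x])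
      (by linarith)
  calc ∫⁻ x : Fin d → ℝ, ENNReal.ofReal ((1 + ∑ j, x j ^ 2) ^ (-ρ))
      ≤ ∫⁻ x : Fin d → ℝ, ENNReal.ofReal ((1 + ‖x‖ ^ 2) ^ (-(2 * ρ) / 2)) :=
        lintegral_mono hptwise
    _ = ENNReal.ofReal (∫ x : Fin d → ℝ, (1 + ‖x‖ ^ 2) ^ (-(2 * ρ) / 2)) :=
        (ofReal_integral_eq_lintegral_ofReal hint
          (Filter.Eventually.of_forall fun x => Real.rpow_nonneg (by positivity) _)).symm
    _ < ⊤ := ENNReal.ofReal_lt_top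

/-- For every `ρ > d` and every multiindex `α ∈ ℕ^d`, the weighted sum
`∑_{n ∈ ℤ^d} ∫_{ℝ^d} (1 + |x|²)^{-ρ} |∂^α φ̂_n(x)|² dx` is finite. -/
theorem stmt6 (d : ℕ) (ρ : ℝ) (hρ : (d : ℝ) < ρ) (α : Fin d → ℕ) :
    (∑' n : Fin d → ℤ,
        ∫⁻ x : Fin d → ℝ,
          ENNReal.ofReal ((1 + ∑ j, x j ^ 2) ^ (-ρ) * (multiDeriv α (phihat n) x) ^ 2)) < ⊤ := by
  classical
  set K : Fin d → ℝ := fun i => 2 * (((α i : ℝ) + 1) * π ^ (α i)) ^ 2 with hK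
  have hKnn : ∀ i, 0 ≤ K i := fun i => by rw [hK]; positivity
  set W : (Fin d → ℝ) → ℝ≥0∞ := fun x => ENNReal.ofReal ((1 + ∑ j, x j ^ 2) ^ (-ρ)) with hW
  set B : (Fin d → ℤ) → (Fin d → ℝ) → ℝ≥0∞ := fun n x =>
    W x * ∏ i, (ENNReal.ofReal (K i) *
      ENNReal.ofReal (1 / (1 + ((n i : ℝ) + x i) ^ 2))) with hB
  -- pointwise bound
  have hpt : ∀ (n : Fin d → ℤ) (x : Fin d → ℝ),
      ENNReal.ofReal ((1 + ∑ j, x j ^ 2) ^ (-ρ) * (multiDeriv α (phihat n) x) ^ 2) ≤ B n x := by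
    intro n x
    have hw : 0 ≤ (1 + ∑ j, x j ^ 2) ^ (-ρ) := Real.rpow_nonneg (by positivity) _
    rw [ENNReal.ofReal_mul hw, hB]
    refine mul_le_mul_right ?_ _
    rw [multiDeriv_phihat]
    have hsq : (∏ i, sincDer (α i) ((n i : ℝ) + x i)) ^ 2
        = ∏ i, (sincDer (α i) ((n i : ℝ) + x i)) ^ 2 := by
      rw [Finset.prod_pow]
    rw [hsq]
    calc ENNReal.ofReal (∏ i, (sincDer (α i) ((n i : ℝ) + x i)) ^ 2)
        ≤ ENNReal.ofReal (∏ i, K i * (1 / (1 + ((n i : ℝ) + x i) ^ 2))) := by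
          apply ENNReal.ofReal_le_ofReal
          refine Finset.prod_le_prod (fun i _ => sq_nonneg _) fun i _ => ?_
          rw [mul_one_div]
          exact sq_sincDer_le (α i) _
      _ = ∏ i, ENNReal.ofReal (K i * (1 / (1 + ((n i : ℝ) + x i) ^ 2))) := by
          rw [ENNReal.ofReal_prod_of_nonneg]
          intro i _
          positivity
      _ = ∏ i, (ENNReal.ofReal (K i) *
            ENNReal.ofReal (1 / (1 + ((n i : ℝ) + x i) ^ 2))) := by
          refine Finset.prod_congr rfl fun i _ => ?_
          rw [ENNReal.ofReal_mul (hKnn i)]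
  have hBmeas : ∀ n : Fin d → ℤ, Measurable (B n) := by
    intro n
    rw [hB]
    apply Measurable.mul
    · rw [hW]
      apply ENNReal.measurable_ofReal.comp
      apply Continuous.measurable
      exact (by fun_prop : Continuous fun x : Fin d → ℝ => 1 + ∑ j, x j ^ 2).rpow_const
        fun x => Or.inl (by positivity)
    · apply Finset.measurable_prod
      intro i _
      apply Measurable.const_mul
      apply ENNReal.measurable_ofReal.comp
      apply Continuous.measurable
      exact continuous_const.div
        (by fun_prop : Continuous fun x : Fin d → ℝ => 1 + ((n i : ℝ) + x i) ^ 2)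
        fun x => by positivity
  -- the total constant
  set C : ℝ≥0∞ := ∏ i : Fin d, (ENNReal.ofReal (K i) * ENNReal.ofReal (2 * π)) with hC
  have hCtop : C < ⊤ := by
    rw [hC]
    refine ENNReal.prod_lt_top fun i _ => ?_
    exact ENNReal.mul_lt_top ENNReal.ofReal_lt_top ENNReal.ofReal_lt_top
  have hsum_le : ∀ x : Fin d → ℝ, (∑' n : Fin d → ℤ, B n x) ≤ W x * C := by
    intro x
    rw [hB]
    simp only
    rw [ENNReal.tsum_mul_left]
    refine mul_le_mul_right ?_ _
    rw [tsum_pi_prod (fun i m => ENNReal.ofReal (K i) *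
      ENNReal.ofReal (1 / (1 + ((m : ℝ) + x i) ^ 2))), hC]
    refine Finset.prod_le_prod' fun i _ => ?_
    rw [ENNReal.tsum_mul_left]
    exact mul_le_mul_right (tsum_int_inv_one_add_sq_le (x i)) _
  calc (∑' n : Fin d → ℤ, ∫⁻ x : Fin d → ℝ,
        ENNReal.ofReal ((1 + ∑ j, x j ^ 2) ^ (-ρ) * (multiDeriv α (phihat n) x) ^ 2))
      ≤ ∑' n : Fin d → ℤ, ∫⁻ x : Fin d → ℝ, B n x :=
        ENNReal.tsum_le_tsum fun n => lintegral_mono (hpt n)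
    _ = ∫⁻ x : Fin d → ℝ, ∑' n : Fin d → ℤ, B n x :=
        (lintegral_tsum fun n => (hBmeas n).aemeasurable).symm
    _ ≤ ∫⁻ x : Fin d → ℝ, W x * C := lintegral_mono hsum_le
    _ = (∫⁻ x : Fin d → ℝ, W x) * C := by
        rw [lintegral_mul_const]
        rw [hW]
        apply ENNReal.measurable_ofReal.comp
        apply Continuous.measurable
        exact (by fun_prop : Continuous fun x : Fin d → ℝ => 1 + ∑ j, x j ^ 2).rpow_const
          fun x => Or.inl (by positivity)
    _ < ⊤ := ENNReal.mul_lt_top (weight_lintegral_lt_top hρ) hCtop
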